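/- For c ≥ 6, e(c) = 3·e(c−2) + 2·e(c−3), where e(c) is the number of even-length sequences of nonzero integers with 2·Σ|a_i| − ℓ = c. -/

import Mathlib

open Classical

/-- The number of sign changes in a finite sequence of integers. -/
def signChanges (l : List ℤ) : ℕ :=
  ((l.zip l.tail).filter (fun p => p.1 * p.2 < 0)).length

/-- The sum of the absolute values of the entries. -/
def absSum (l : List ℤ) : ℕ := (l.map Int.natAbs).sum

/-- An even continued fraction representation: a nonempty even-length
sequence of nonzero integers. -/
def IsECF (l : List ℤ) : Prop :=
  l ≠ [] ∧ Even l.length ∧ ∀ x ∈ l, x ≠ 0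

/-- Palindromic or anti-palindromic sequences. -/
def IsPalOrAnti (l : List ℤ) : Prop :=
  l.reverse = l ∨ l.reverse = l.map (fun x => -x)

/-- The set `E(c)` of even continued fractions with crossing number `c`. -/
def Ecross (c : ℕ) : Set (List ℤ) :=
  {l | IsECF l ∧ (2 * absSum l : ℤ) - signChanges l = c}

/-- The set `E(c,b)` of even continued fractions with crossing number `c`
and braid index `b`. -/
def Eset (c b : ℕ) : Set (List ℤ) :=
  {l | IsECF l ∧ (2 * absSum l : ℤ) - signChanges l = c ∧
    (absSum l : ℤ) - signChanges l + 1 = b}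

noncomputable def e (c b : ℕ) : ℕ := (Eset c b).ncard

noncomputable def eTot (c : ℕ) : ℕ := (Ecross c).ncard

noncomputable def ep (c b : ℕ) : ℕ := (Eset c b ∩ {l | IsPalOrAnti l}).ncard

noncomputable def epTot (c : ℕ) : ℕ := (Ecross c ∩ {l | IsPalOrAnti l}).ncard


lemma signChanges_nil : signChanges ([] : List ℤ) = 0 := rfl
lemma signChanges_single (a : ℤ) : signChanges [a] = 0 := rfl
lemma absSum_cons (a : ℤ) (t : List ℤ) : absSum (a :: t) = a.natAbs + absSum t := rfl
lemma signChanges_cons_cons (a b : ℤ) (t : List ℤ) :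
    signChanges (a :: b :: t) = (if a * b < 0 then 1 else 0) + signChanges (b :: t) := by
  simp only [signChanges, List.zip, List.tail, List.zipWith, List.filter]
  split_ifs with h
  · rw [decide_eq_true h]; simp [Nat.add_comm]
  · rw [decide_eq_false h]; simp

lemma signChanges_le (l : List ℤ) : signChanges l ≤ l.length := by
  calc signChanges l ≤ (l.zip l.tail).length := List.length_filter_le _ _
  _ ≤ l.length := by rw [List.length_zip]; omega

lemma length_le_absSum {l : List ℤ} (h : ∀ x ∈ l, x ≠ 0) : l.length ≤ absSum l := by
  induction l with
  | nil => simp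
  | cons a t ih =>
    have ha : a ≠ 0 := h a (by simp)
    have : 1 ≤ a.natAbs := by omega
    have := ih (fun x hx => h x (by simp [hx]))
    simp only [List.length_cons, absSum_cons]; omega

lemma mem_le_absSum {l : List ℤ} {x : ℤ} (hx : x ∈ l) : x.natAbs ≤ absSum l := by
  induction l with
  | nil => simp at hx
  | cons a t ih =>
    rcases List.mem_cons.1 hx with rfl | h
    · simp [absSum_cons]
    · have := ih h; simp only [absSum_cons]; omega

lemma finite_bounded (m : ℕ) : ∀ n : ℕ, {l : List ℤ | l.length ≤ n ∧ ∀ x ∈ l, x.natAbs ≤ m}.Finite := by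
  intro n
  induction n with
  | zero =>
    apply Set.Finite.subset (Set.finite_singleton ([] : List ℤ))
    rintro l ⟨hl, -⟩
    have : l = [] := List.eq_nil_of_length_eq_zero (by omega)
    simp [this]
  | succ n ih =>
    have hIcc : (Set.Icc (-(m:ℤ)) m).Finite := Set.finite_Icc _ _
    apply Set.Finite.subset
      (Set.Finite.union (Set.finite_singleton ([] : List ℤ))
        (Set.Finite.image (fun p : ℤ × List ℤ => p.1 :: p.2) (hIcc.prod ih)))
    rintro l ⟨hl, hm⟩
    cases l with
    | nil => left; rfl
    | cons a t =>
      right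
      refine ⟨(a, t), ⟨?_, ?_, ?_⟩, rfl⟩
      · have := hm a (by simp)
        simp only [Set.mem_Icc]; omega
      · show t.length ≤ n
        simp only [List.length_cons] at hl; omega
      · show ∀ x ∈ t, x.natAbs ≤ m
        exact fun x hx => hm x (by simp [hx])

lemma finite_cross (k : ℤ) :
    {l : List ℤ | (∀ x ∈ l, x ≠ 0) ∧ 2 * (absSum l : ℤ) - signChanges l = k}.Finite := by
  apply Set.Finite.subset (finite_bounded k.toNat k.toNat)
  rintro l ⟨h0, hk⟩
  have h1 := signChanges_le l
  have h2 := length_le_absSum h0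
  constructor
  · omega
  · intro x hx
    have := mem_le_absSum hx
    omega

lemma signChanges_replace_head {a a' : ℤ} (h : 0 < a ↔ 0 < a') (ha : a ≠ 0) (ha' : a' ≠ 0)
    (t : List ℤ) : signChanges (a' :: t) = signChanges (a :: t) := by
  cases t with
  | nil => rw [signChanges_single, signChanges_single]
  | cons b t' =>
    rw [signChanges_cons_cons, signChanges_cons_cons]
    have : a' * b < 0 ↔ a * b < 0 := by rw [mul_neg_iff, mul_neg_iff]; omega
    simp only [this]

lemma inc_facts {a : ℤ} (ha : a ≠ 0) :
    (if 0 < a then a+1 else a-1) ≠ 0 ∧ ((if 0 < a then a+1 else a-1)).natAbs = a.natAbs + 1 ∧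
      (0 < a ↔ 0 < (if 0 < a then a+1 else a-1)) := by
  split_ifs with hp <;> exact ⟨by omega, by omega, by omega⟩

lemma dec_facts {a : ℤ} (h : 2 ≤ a.natAbs) :
    (if 0 < a then a-1 else a+1) ≠ 0 ∧ a.natAbs = (if 0 < a then a-1 else a+1).natAbs + 1 ∧
    (0 < a ↔ 0 < (if 0 < a then a-1 else a+1)) ∧
    (if 0 < (if 0 < a then a-1 else a+1) then (if 0 < a then a-1 else a+1)+1
      else (if 0 < a then a-1 else a+1)-1) = a := by
  rcases lt_or_ge 0 a with hp | hp
  · have h1 : (0:ℤ) < a - 1 := by omega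
    rw [if_pos hp, if_pos h1]
    exact ⟨by omega, by omega, by omega, by omega⟩
  · have h0 : ¬ (0:ℤ) < a := not_lt.2 hp
    have h1 : ¬ (0:ℤ) < a + 1 := by omega
    rw [if_neg h0, if_neg h1]
    exact ⟨by omega, by omega, by omega, by omega⟩

def Scross (P : ℕ → Prop) (k : ℤ) : Set (List ℤ) :=
  {l | l ≠ [] ∧ P l.length ∧ (∀ x ∈ l, x ≠ 0) ∧ 2 * (absSum l : ℤ) - signChanges l = k}

def incL : List ℤ → List ℤ
  | [] => []
  | a :: t => (if 0 < a then a+1 else a-1) :: t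

def g0 (l : List ℤ) : List ℤ := (if 0 < l.headI then 1 else -1) :: l
def g1 (l : List ℤ) : List ℤ := (if 0 < l.headI then -1 else 1) :: l

lemma decomp (P Q : ℕ → Prop) (hPQ : ∀ n, P (n+1) ↔ Q n) (c : ℕ) (h2 : ¬ (P 1 ∧ c = 0)) :
    Scross P ((c:ℤ)+2) = incL '' Scross P c ∪ g0 '' Scross Q c ∪ g1 '' Scross Q ((c:ℤ)+1) := by
  ext l
  constructor
  · rintro ⟨hne, hP, h0, hcr⟩
    obtain ⟨a, t, rfl⟩ : ∃ a t, l = a :: t := by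
      cases l with
      | nil => exact absurd rfl hne
      | cons a t => exact ⟨_, _, rfl⟩
    have ha : a ≠ 0 := h0 a (List.mem_cons_self)
    by_cases h2a : 2 ≤ a.natAbs
    · left; left
      obtain ⟨hne0, habs, hiff, hrt⟩ := dec_facts h2a
      refine ⟨(if 0 < a then a-1 else a+1) :: t, ⟨List.cons_ne_nil _ _, by simpa using hP, ?_, ?_⟩, ?_⟩
      · intro x hx
        rcases List.mem_cons.1 hx with rfl | hx
        · exact hne0
        · exact h0 x (List.mem_cons_of_mem _ hx)
      · have hs : signChanges ((if 0 < a then a-1 else a+1) :: t) = signChanges (a :: t) :=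
          signChanges_replace_head hiff ha hne0 t
        rw [hs]
        rw [absSum_cons] at hcr ⊢
        rw [habs] at hcr
        omega
      · show incL _ = a :: t
        rw [incL]
        rw [hrt]
    · have h1a : a.natAbs = 1 := by omega
      cases t with
      | nil =>
        exfalso
        apply h2
        refine ⟨by simpa using hP, ?_⟩
        rw [signChanges_single, absSum_cons, h1a] at hcr
        have : absSum ([] : List ℤ) = 0 := rfl
        rw [this] at hcr
        omega
      | cons b t' =>
        have hb : b ≠ 0 := h0 b (by simp)
        have hQ : Q (b :: t').length := (hPQ _).1 (by simpa using hP)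
        have h0' : ∀ x ∈ b :: t', x ≠ 0 := fun x hx => h0 x (by simp [hx])
        by_cases hab : a * b < 0
        · right
          refine ⟨b :: t', ⟨List.cons_ne_nil _ _, hQ, h0', ?_⟩, ?_⟩
          · have hsc := signChanges_cons_cons a b t'
            rw [if_pos hab] at hsc
            rw [hsc, absSum_cons, h1a] at hcr
            omega
          · show g1 (b :: t') = a :: b :: t'
            rw [g1]
            have : (b :: t').headI = b := rfl
            rw [this]
            congr 1
            rcases mul_neg_iff.1 hab with ⟨hpa, hnb⟩ | ⟨hna, hpb⟩
            · rw [if_neg (by omega)]; omega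
            · rw [if_pos hpb]; omega
        · left; right
          have hpos : 0 < a * b := lt_of_le_of_ne (not_lt.1 hab) (Ne.symm (mul_ne_zero ha hb))
          refine ⟨b :: t', ⟨List.cons_ne_nil _ _, hQ, h0', ?_⟩, ?_⟩
          · have hsc := signChanges_cons_cons a b t'
            rw [if_neg hab] at hsc
            rw [hsc, absSum_cons, h1a] at hcr
            omega
          · show g0 (b :: t') = a :: b :: t'
            rw [g0]
            have : (b :: t').headI = b := rfl
            rw [this]
            congr 1
            rcases mul_pos_iff.1 hpos with ⟨hpa, hpb⟩ | ⟨hna, hnb⟩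
            · rw [if_pos hpb]; omega
            · rw [if_neg (by omega)]; omega
  · rintro ((⟨m, hm, rfl⟩ | ⟨m, hm, rfl⟩) | ⟨m, hm, rfl⟩)
    · obtain ⟨hne, hP, h0, hcr⟩ := hm
      obtain ⟨a, t, rfl⟩ : ∃ a t, m = a :: t := by
        cases m with
        | nil => exact absurd rfl hne
        | cons a t => exact ⟨_, _, rfl⟩
      have ha : a ≠ 0 := h0 a (List.mem_cons_self)
      obtain ⟨hne0, habs, hiff⟩ := inc_facts ha
      rw [incL]
      refine ⟨List.cons_ne_nil _ _, by simpa using hP, ?_, ?_⟩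
      · intro x hx
        rcases List.mem_cons.1 hx with rfl | hx
        · exact hne0
        · exact h0 x (List.mem_cons_of_mem _ hx)
      · have hs : signChanges ((if 0 < a then a+1 else a-1) :: t) = signChanges (a :: t) :=
          signChanges_replace_head hiff ha hne0 t
        rw [hs, absSum_cons, habs]
        rw [absSum_cons] at hcr
        omega
    · obtain ⟨hne, hQ, h0, hcr⟩ := hm
      obtain ⟨b, t, rfl⟩ : ∃ a t, m = a :: t := by
        cases m with
        | nil => exact absurd rfl hne
        | cons a t => exact ⟨_, _, rfl⟩
      have hb : b ≠ 0 := h0 b (List.mem_cons_self)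
      rw [g0]
      have hh : (b :: t).headI = b := rfl
      rw [hh]
      refine ⟨List.cons_ne_nil _ _, by simpa [hPQ] using hQ, ?_, ?_⟩
      · intro x hx
        rcases List.mem_cons.1 hx with rfl | hx
        · split_ifs <;> omega
        · exact h0 x hx
      · have hsc := signChanges_cons_cons (if 0 < b then 1 else -1) b t
        have hcond : ¬ ((if 0 < b then (1:ℤ) else -1) * b < 0) := by
          split_ifs with hpb
          · simp only [one_mul]; omega
          · have : (-1 : ℤ) * b = -b := by ring
            rw [this]; omega
        rw [if_neg hcond] at hsc
        rw [hsc, absSum_cons]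
        have : (if 0 < b then (1:ℤ) else -1).natAbs = 1 := by split_ifs <;> rfl
        rw [this]
        omega
    · obtain ⟨hne, hQ, h0, hcr⟩ := hm
      obtain ⟨b, t, rfl⟩ : ∃ a t, m = a :: t := by
        cases m with
        | nil => exact absurd rfl hne
        | cons a t => exact ⟨_, _, rfl⟩
      have hb : b ≠ 0 := h0 b (List.mem_cons_self)
      rw [g1]
      have hh : (b :: t).headI = b := rfl
      rw [hh]
      refine ⟨List.cons_ne_nil _ _, by simpa [hPQ] using hQ, ?_, ?_⟩
      · intro x hx
        rcases List.mem_cons.1 hx with rfl | hx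
        · split_ifs <;> omega
        · exact h0 x hx
      · have hsc := signChanges_cons_cons (if 0 < b then -1 else 1) b t
        have hcond : ((if 0 < b then (-1:ℤ) else 1) * b < 0) := by
          split_ifs with hpb
          · have : (-1 : ℤ) * b = -b := by ring
            rw [this]; omega
          · simp only [one_mul]; omega
        rw [if_pos hcond] at hsc
        rw [hsc, absSum_cons]
        have : (if 0 < b then (-1:ℤ) else 1).natAbs = 1 := by split_ifs <;> rfl
        rw [this]
        omega

lemma scross_finite (P : ℕ → Prop) (k : ℤ) : (Scross P k).Finite :=
  (finite_cross k).subset (fun l hl => ⟨hl.2.2.1, hl.2.2.2⟩)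

lemma exists_cons_of_mem {P : ℕ → Prop} {k : ℤ} {l : List ℤ} (h : l ∈ Scross P k) :
    ∃ a t, l = a :: t ∧ a ≠ 0 := by
  cases l with
  | nil => exact absurd rfl h.1
  | cons a t => exact ⟨a, t, rfl, h.2.2.1 a (List.mem_cons_self)⟩

lemma incL_injOn (P : ℕ → Prop) (k : ℤ) : Set.InjOn incL (Scross P k) := by
  rintro l1 h1 l2 h2 heq
  obtain ⟨a, t1, rfl, ha⟩ := exists_cons_of_mem h1
  obtain ⟨b, t2, rfl, hb⟩ := exists_cons_of_mem h2
  rw [incL, incL] at heq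
  simp only [List.cons.injEq] at heq ⊢
  obtain ⟨hh, rfl⟩ := heq
  refine ⟨?_, rfl⟩
  split_ifs at hh <;> omega

lemma g0_injOn (P : ℕ → Prop) (k : ℤ) : Set.InjOn g0 (Scross P k) := by
  rintro l1 _ l2 _ heq
  have := congrArg List.tail heq
  simpa [g0] using this

lemma g1_injOn (P : ℕ → Prop) (k : ℤ) : Set.InjOn g1 (Scross P k) := by
  rintro l1 _ l2 _ heq
  have := congrArg List.tail heq
  simpa [g1] using this

lemma mem_incL_image {P : ℕ → Prop} {k : ℤ} {l : List ℤ} (h : l ∈ incL '' Scross P k) :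
    2 ≤ l.headI.natAbs := by
  obtain ⟨m, hm, rfl⟩ := h
  obtain ⟨a, t, rfl, ha⟩ := exists_cons_of_mem hm
  rw [incL]
  show 2 ≤ (if 0 < a then a+1 else a-1).natAbs
  split_ifs <;> omega

lemma mem_g0_image {P : ℕ → Prop} {k : ℤ} {l : List ℤ} (h : l ∈ g0 '' Scross P k) :
    l.headI.natAbs = 1 ∧ (0 < l.headI ↔ 0 < l.tail.headI) := by
  obtain ⟨m, hm, rfl⟩ := h
  obtain ⟨b, t, rfl, hb⟩ := exists_cons_of_mem hm
  rw [g0]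
  have hh : (b :: t).headI = b := rfl
  rw [hh]
  show (if 0 < b then (1:ℤ) else -1).natAbs = 1 ∧
    (0 < (if 0 < b then (1:ℤ) else -1) ↔ 0 < (b :: t).headI)
  rw [hh]
  split_ifs with hpb
  · exact ⟨rfl, by omega⟩
  · exact ⟨rfl, by omega⟩

lemma mem_g1_image {P : ℕ → Prop} {k : ℤ} {l : List ℤ} (h : l ∈ g1 '' Scross P k) :
    l.headI.natAbs = 1 ∧ ¬(0 < l.headI ↔ 0 < l.tail.headI) := by
  obtain ⟨m, hm, rfl⟩ := h
  obtain ⟨b, t, rfl, hb⟩ := exists_cons_of_mem hm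
  rw [g1]
  have hh : (b :: t).headI = b := rfl
  rw [hh]
  show (if 0 < b then (-1:ℤ) else 1).natAbs = 1 ∧
    ¬(0 < (if 0 < b then (-1:ℤ) else 1) ↔ 0 < (b :: t).headI)
  rw [hh]
  split_ifs with hpb
  · exact ⟨rfl, by omega⟩
  · exact ⟨rfl, by omega⟩

lemma master (P Q : ℕ → Prop) (hPQ : ∀ n, P (n+1) ↔ Q n) (c : ℕ) (h2 : ¬ (P 1 ∧ c = 0)) :
    (Scross P ((c:ℤ)+2)).ncard =
      (Scross P (c:ℤ)).ncard + (Scross Q (c:ℤ)).ncard + (Scross Q ((c:ℤ)+1)).ncard := by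
  rw [decomp P Q hPQ c h2]
  have f1 := (scross_finite P (c:ℤ)).image incL
  have f2 := (scross_finite Q (c:ℤ)).image g0
  have f3 := (scross_finite Q ((c:ℤ)+1)).image g1
  have d12 : Disjoint (incL '' Scross P (c:ℤ)) (g0 '' Scross Q (c:ℤ)) := by
    rw [Set.disjoint_left]
    intro l hl1 hl2
    have := mem_incL_image hl1
    have := (mem_g0_image hl2).1
    omega
  have d13 : Disjoint (incL '' Scross P (c:ℤ) ∪ g0 '' Scross Q (c:ℤ))
      (g1 '' Scross Q ((c:ℤ)+1)) := by
    rw [Set.disjoint_left]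
    rintro l (hl1 | hl1) hl2
    · have := mem_incL_image hl1
      have := (mem_g1_image hl2).1
      omega
    · have h01 := mem_g0_image hl1
      have h11 := mem_g1_image hl2
      exact h11.2 h01.2
  rw [Set.ncard_union_eq d13 (f1.union f2) f3, Set.ncard_union_eq d12 f1 f2,
    Set.ncard_image_of_injOn (incL_injOn P _), Set.ncard_image_of_injOn (g0_injOn Q _),
    Set.ncard_image_of_injOn (g1_injOn Q _)]

noncomputable def eT (c : ℕ) : ℕ := (Scross Even (c:ℤ)).ncard
noncomputable def oT (c : ℕ) : ℕ := (Scross Odd (c:ℤ)).ncard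

lemma hEO : ∀ n, Even (n+1) ↔ Odd n := by
  intro n
  rw [Nat.even_add_one, Nat.not_even_iff_odd]

lemma hOE : ∀ n, Odd (n+1) ↔ Even n := by
  intro n
  rw [Nat.odd_add_one, Nat.not_odd_iff_even]

lemma cast_add_two (c : ℕ) : ((c+2:ℕ):ℤ) = (c:ℤ)+2 := by push_cast; ring
lemma cast_add_one (c : ℕ) : ((c+1:ℕ):ℤ) = (c:ℤ)+1 := by push_cast; ring

lemma masterE (c : ℕ) : eT (c+2) = eT c + oT c + oT (c+1) := by
  have h := master Even Odd hEO c (by simp)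
  unfold eT oT
  rw [cast_add_two, cast_add_one]
  exact h

lemma masterO (c : ℕ) (hc : c ≠ 0) : oT (c+2) = oT c + eT c + eT (c+1) := by
  have h := master Odd Even hOE c (fun h => absurd h.2 hc)
  unfold eT oT
  rw [cast_add_two, cast_add_one]
  exact h

lemma Ecross_eq_Scross (c : ℕ) : Ecross c = Scross Even (c:ℤ) := by
  ext l
  simp only [Ecross, Scross, IsECF, Set.mem_setOf_eq, and_assoc]

lemma eTot_eq_eT (c : ℕ) : eTot c = eT c := by
  rw [eTot, eT, Ecross_eq_Scross]

theorem eTot_recursion (c : ℕ) (hc : 6 ≤ c) :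
    eTot c = 3 * eTot (c - 2) + 2 * eTot (c - 3) := by
  obtain ⟨n, rfl⟩ := Nat.exists_eq_add_of_le hc
  have h1 : 6 + n - 2 = n + 4 := by omega
  have h2 : 6 + n - 3 = n + 3 := by omega
  have h3 : 6 + n = n + 6 := by omega
  rw [h1, h2, h3, eTot_eq_eT, eTot_eq_eT, eTot_eq_eT]
  have A1 := masterE (n+4)
  have A2 := masterE (n+2)
  have B1 := masterO (n+3) (by omega)
  have B2 := masterO (n+2) (by omega)
  rw [show n+4+2 = n+6 by omega] at A1
  rw [show n+4+1 = n+5 by omega] at A1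
  rw [show n+2+2 = n+4 by omega] at A2
  rw [show n+2+1 = n+3 by omega] at A2
  rw [show n+3+2 = n+5 by omega] at B1
  rw [show n+3+1 = n+4 by omega] at B1
  rw [show n+2+2 = n+4 by omega] at B2
  rw [show n+2+1 = n+3 by omega] at B2
  omega
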